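/- Let B be an n×n real expanding matrix with card D = |det B| = m ∈ ℤ, where D ⊂ ℝⁿ is a finite set with 0 ∈ D, and suppose the self-affine set K = K(B,D) has positive Lebesgue measure. Then the translates {K + ℓ}_{ℓ∈D_∞} are pairwise essentially disjoint; equivalently, Σ_{ℓ∈D_∞} χ_{K+ℓ}(x) ≤ 1 for almost every x ∈ ℝⁿ. -/

import Mathlib

open MeasureTheory Filter
open scoped Pointwise
open scoped ENNReal

/-- `D_∞ = ⋃_{k ≥ 1} D_k` where `D_k = {Σ_{j<k} B^j ℓ_j : ℓ_j ∈ D}`. -/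
def Dinfty {n : ℕ} (B : Matrix (Fin n) (Fin n) ℝ)
    (D : Finset (EuclideanSpace ℝ (Fin n))) : Set (EuclideanSpace ℝ (Fin n)) :=
  {x | ∃ k : ℕ, 1 ≤ k ∧ ∃ f : Fin k → D,
    x = ∑ j : Fin k, Matrix.toEuclideanLin (B ^ (j : ℕ)) (f j)}

open Set in
/-- If a finite union has measure equal to the sum of the measures (and everything is finite),
then the pieces are pairwise essentially disjoint. -/
private lemma null_inter_of_measure_biUnion_eq {α : Type*} [MeasurableSpace α]
    (μ : Measure α) {ι : Type*} [DecidableEq ι] (I : Finset ι) (s : ι → Set α)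
    (hmeas : ∀ i, MeasurableSet (s i))
    (hfin : (∑ i ∈ I, μ (s i)) ≠ ⊤)
    (heq : μ (⋃ i ∈ I, s i) = ∑ i ∈ I, μ (s i)) :
    ∀ i ∈ I, ∀ j ∈ I, i ≠ j → μ (s i ∩ s j) = 0 := by
  intro i hi j hj hij
  have hjI : j ∈ I.erase i := Finset.mem_erase.2 ⟨fun h => hij h.symm, hj⟩
  have hsum : ∑ x ∈ I, μ (s x)
      = μ (s i) + (μ (s j) + ∑ x ∈ (I.erase i).erase j, μ (s x)) := by
    rw [← Finset.add_sum_erase _ (fun x => μ (s x)) hi,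
      ← Finset.add_sum_erase _ (fun x => μ (s x)) hjI]
  have hsub : (⋃ x ∈ I, s x) ⊆ (s i ∪ s j) ∪ ⋃ x ∈ (I.erase i).erase j, s x := by
    intro y hy
    rcases mem_iUnion₂.1 hy with ⟨x, hxI, hxy⟩
    by_cases hxi : x = i
    · exact Or.inl (Or.inl (hxi ▸ hxy))
    by_cases hxj : x = j
    · exact Or.inl (Or.inr (hxj ▸ hxy))
    · exact Or.inr (mem_iUnion₂.2 ⟨x, Finset.mem_erase.2 ⟨hxj, Finset.mem_erase.2 ⟨hxi, hxI⟩⟩, hxy⟩)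
  have key : (∑ x ∈ I, μ (s x)) + μ (s i ∩ s j) ≤ (∑ x ∈ I, μ (s x)) + 0 := by
    calc (∑ x ∈ I, μ (s x)) + μ (s i ∩ s j)
        = μ (⋃ x ∈ I, s x) + μ (s i ∩ s j) := by rw [heq]
      _ ≤ μ ((s i ∪ s j) ∪ ⋃ x ∈ (I.erase i).erase j, s x) + μ (s i ∩ s j) :=
          add_le_add (measure_mono hsub) le_rfl
      _ ≤ (μ (s i ∪ s j) + μ (⋃ x ∈ (I.erase i).erase j, s x)) + μ (s i ∩ s j) :=
          add_le_add (measure_union_le _ _) le_rfl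
      _ = (μ (s i ∪ s j) + μ (s i ∩ s j)) + μ (⋃ x ∈ (I.erase i).erase j, s x) := by ring
      _ = (μ (s i) + μ (s j)) + μ (⋃ x ∈ (I.erase i).erase j, s x) := by
          rw [measure_union_add_inter _ (hmeas j)]
      _ ≤ (μ (s i) + μ (s j)) + ∑ x ∈ (I.erase i).erase j, μ (s x) :=
          add_le_add le_rfl (measure_biUnion_finset_le _ _)
      _ = (∑ x ∈ I, μ (s x)) + 0 := by rw [hsum]; ring
  exact le_antisymm ((ENNReal.add_le_add_iff_left hfin).1 key) zero_le

/-- **Lemma.** Let `B` be an expanding real `n×n` matrix, `D ⊆ ℝⁿ` finite with `0 ∈ D` and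
`card D = |det B| = m ∈ ℤ`, and suppose the self-affine set `K = K(B,D)` has positive
Lebesgue measure. Then the translates `{K + ℓ}_{ℓ ∈ D_∞}` are pairwise essentially disjoint:
`Σ_{ℓ ∈ D_∞} χ_{K+ℓ}(x) ≤ 1` for almost every `x ∈ ℝⁿ`. -/
theorem translates_essentially_disjoint {n : ℕ} (B : Matrix (Fin n) (Fin n) ℝ)
    (hB : ∀ μ ∈ spectrum ℂ (B.map (algebraMap ℝ ℂ)), 1 < ‖μ‖)
    (m : ℤ) (hm : |B.det| = (m : ℝ))
    (D : Finset (EuclideanSpace ℝ (Fin n))) (hD0 : (0 : EuclideanSpace ℝ (Fin n)) ∈ D)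
    (hcard : (D.card : ℝ) = |B.det|)
    (K : Set (EuclideanSpace ℝ (Fin n))) (hKc : IsCompact K) (hKne : K.Nonempty)
    (hK : Matrix.toEuclideanLin B '' K = ⋃ d ∈ D, (fun x => x + d) '' K)
    (hKpos : 0 < volume K) :
    ∀ᵐ x : EuclideanSpace ℝ (Fin n),
      ∑' ℓ : Dinfty B D,
        ((fun y => y + (ℓ : EuclideanSpace ℝ (Fin n))) '' K).indicator
          (fun _ => (1 : ℝ≥0∞)) x ≤ 1 := by
  classical
  set L : ℕ → (EuclideanSpace ℝ (Fin n) →ₗ[ℝ] EuclideanSpace ℝ (Fin n)) :=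
    fun j => Matrix.toEuclideanLin (B ^ j) with hL
  set T : EuclideanSpace ℝ (Fin n) →ₗ[ℝ] EuclideanSpace ℝ (Fin n) :=
    Matrix.toEuclideanLin B with hT
  set S : ∀ k : ℕ, (Fin k → D) → EuclideanSpace ℝ (Fin n) :=
    fun k f => ∑ j : Fin k, L (j : ℕ) (f j) with hS
  have hL0 : ∀ x : EuclideanSpace ℝ (Fin n), L 0 x = x := by
    intro x
    simp only [hL, pow_zero, Matrix.toEuclideanLin_eq_toLin, Matrix.toLin_one, LinearMap.id_apply]
  have hLsucc : ∀ (j : ℕ) (x : EuclideanSpace ℝ (Fin n)), L (j + 1) x = T (L j x) := by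
    intro j x
    simp only [hL, hT, pow_succ', Matrix.toEuclideanLin_eq_toLin]
    rw [Matrix.toLin_mul (PiLp.basisFun 2 ℝ (Fin n)) (PiLp.basisFun 2 ℝ (Fin n))
      (PiLp.basisFun 2 ℝ (Fin n)) B (B ^ j), LinearMap.comp_apply]
  have hTK : ∀ v : EuclideanSpace ℝ (Fin n),
      v ∈ T '' K ↔ ∃ d ∈ D, ∃ w, w ∈ K ∧ w + d = v := by
    intro v
    rw [hK]
    simp only [Set.mem_iUnion, Set.mem_image, exists_prop] <;> tauto
  have hSsucc : ∀ (k : ℕ) (g : Fin (k + 1) → D),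
      S (k + 1) g = ((g 0 : EuclideanSpace ℝ (Fin n))) + T (S k (fun j => g j.succ)) := by
    intro k g
    rw [hS]
    simp only
    have hterm : ∀ j : Fin k, L ((j.succ : Fin (k+1)) : ℕ) ((g j.succ : EuclideanSpace ℝ (Fin n)))
        = T (L (j : ℕ) ((g j.succ : EuclideanSpace ℝ (Fin n)))) := by
      intro j
      rw [Fin.val_succ]
      exact hLsucc _ _
    rw [Fin.sum_univ_succ, Finset.sum_congr rfl fun j _ => hterm j, ← map_sum]
    simp only [Fin.val_zero, hL0]
  have hdecomp : ∀ k : ℕ, L k '' K = ⋃ f : Fin k → D, (fun y => y + S k f) '' K := by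
    intro k
    induction k with
    | zero =>
      have h1 : L 0 '' K = K := by
        ext x; simp only [Set.mem_image]
        constructor
        · rintro ⟨y, hy, rfl⟩; rwa [hL0]
        · intro hx; exact ⟨x, hx, hL0 x⟩
      have h2 : ∀ f : Fin 0 → D, S 0 f = 0 := by
        intro f; rw [hS]; simp
      rw [h1]
      ext x
      simp only [Set.mem_iUnion, Set.mem_image, h2, add_zero]
      constructor
      · intro hx; exact ⟨fun j => j.elim0, x, hx, rfl⟩
      · rintro ⟨f, y, hy, rfl⟩; exact hy
    | succ k ih =>
      ext x
      simp only [Set.mem_iUnion, Set.mem_image]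
      constructor
      · rintro ⟨y, hy, rfl⟩
        have h1 : L k y ∈ L k '' K := ⟨y, hy, rfl⟩
        rw [ih] at h1
        rcases Set.mem_iUnion.1 h1 with ⟨f, hf⟩
        rcases hf with ⟨z, hz, hzy⟩
        have hzy' : z + S k f = L k y := hzy
        have h2 : T z ∈ T '' K := ⟨z, hz, rfl⟩
        rcases (hTK _).1 h2 with ⟨d, hd, w, hw, hwd⟩
        refine ⟨Fin.cons ⟨d, hd⟩ f, w, hw, ?_⟩
        rw [hSsucc]
        simp only [Fin.cons_zero, Fin.cons_succ]
        rw [hLsucc, ← hzy', map_add, ← hwd]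
        show w + (d + T (S k f)) = w + d + T (S k f)
        abel
      · rintro ⟨g, w, hw, rfl⟩
        have h2 : w + (g 0 : EuclideanSpace ℝ (Fin n)) ∈ T '' K :=
          (hTK _).2 ⟨_, (g 0).2, w, hw, rfl⟩
        rcases h2 with ⟨z, hz, hzw⟩
        have h1 : z + S k (fun j => g j.succ) ∈ L k '' K := by
          rw [ih]
          exact Set.mem_iUnion.2 ⟨fun j => g j.succ, ⟨z, hz, rfl⟩⟩
        rcases h1 with ⟨y, hy, hyz⟩
        refine ⟨y, hy, ?_⟩
        rw [hSsucc, hLsucc, hyz, map_add, hzw]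
        abel
  -- volumes
  have hKvol_ne_top : volume K ≠ ⊤ := hKc.measure_lt_top.ne
  have hvol_trans : ∀ v : EuclideanSpace ℝ (Fin n),
      volume ((fun y => y + v) '' K) = volume K := by
    intro v
    have h : (fun y => y + v) '' K = v +ᵥ K := by
      ext x
      simp only [Set.mem_image, Set.mem_vadd_set]
      constructor
      · rintro ⟨y, hy, rfl⟩; exact ⟨y, hy, add_comm v y⟩
      · rintro ⟨y, hy, rfl⟩; exact ⟨y, hy, add_comm y v⟩
    rw [h, measure_vadd]
  have hvolL : ∀ k : ℕ, volume (L k '' K) = (D.card : ℝ≥0∞) ^ k * volume K := by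
    intro k
    rw [hL]
    simp only
    rw [Measure.addHaar_image_linearMap]
    congr 1
    rw [Matrix.toEuclideanLin_eq_toLin, LinearMap.det_toLin, Matrix.det_pow, abs_pow,
      ← hcard]
    rw [ENNReal.ofReal_pow (Nat.cast_nonneg D.card), ENNReal.ofReal_natCast]
  have hmeasA : ∀ v : EuclideanSpace ℝ (Fin n), MeasurableSet ((fun y => y + v) '' K) := by
    intro v
    exact (hKc.image (continuous_id.add continuous_const)).measurableSet
  have hC : ∀ (k : ℕ) (f g : Fin k → D), S k f ≠ S k g →
      volume ((fun y => y + S k f) '' K ∩ (fun y => y + S k g) '' K) = 0 := by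
    intro k f g hfg
    have hcardfun : (Fintype.card (Fin k → D) : ℝ≥0∞) = (D.card : ℝ≥0∞) ^ k := by
      rw [Fintype.card_fun, Fintype.card_coe, Fintype.card_fin]
      push_cast
      ring
    have hsum : ∑ f : Fin k → D, volume ((fun y => y + S k f) '' K)
        = (D.card : ℝ≥0∞) ^ k * volume K := by
      rw [Finset.sum_congr rfl fun f _ => hvol_trans (S k f), Finset.sum_const,
        Finset.card_univ, nsmul_eq_mul, hcardfun]
    have hfin : (∑ f : Fin k → D, volume ((fun y => y + S k f) '' K)) ≠ ⊤ := by
      rw [hsum]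
      exact ENNReal.mul_ne_top (ENNReal.pow_ne_top (ENNReal.natCast_ne_top _)) hKvol_ne_top
    have hUeq : volume (⋃ f ∈ (Finset.univ : Finset (Fin k → D)), (fun y => y + S k f) '' K)
        = ∑ f : Fin k → D, volume ((fun y => y + S k f) '' K) := by
      have h : (⋃ f ∈ (Finset.univ : Finset (Fin k → D)), (fun y => y + S k f) '' K)
          = ⋃ f : Fin k → D, (fun y => y + S k f) '' K := by
        simp
      rw [h, ← hdecomp k, hvolL k, hsum]
    exact null_inter_of_measure_biUnion_eq volume Finset.univ _
      (fun f => hmeasA (S k f)) hfin hUeq f (Finset.mem_univ _) g (Finset.mem_univ _)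
      (fun h => hfg (by rw [h]))
  have hpad : ∀ (k N : ℕ), k ≤ N → ∀ f : Fin k → D, ∃ g : Fin N → D, S N g = S k f := by
    intro k N hkN f
    refine ⟨fun j => if h : (j : ℕ) < k then f ⟨j, h⟩ else ⟨0, hD0⟩, ?_⟩
    rw [hS]
    simp only
    have hF : ∀ j : Fin N,
        L (j : ℕ) (((if h : (j : ℕ) < k then f ⟨j, h⟩ else ⟨0, hD0⟩) : D) :
          EuclideanSpace ℝ (Fin n))
        = (fun i : ℕ => if h : i < k then L i ((f ⟨i, h⟩ : D) : EuclideanSpace ℝ (Fin n))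
            else 0) (j : ℕ) := by
      intro j
      by_cases h : (j : ℕ) < k
      · simp [h]
      · simp [h]
    rw [Finset.sum_congr rfl fun j _ => hF j]
    rw [Fin.sum_univ_eq_sum_range
      (fun i => if h : i < k then L i ((f ⟨i, h⟩ : D) : EuclideanSpace ℝ (Fin n)) else 0) N]
    rw [← Finset.sum_subset (Finset.range_subset_range.2 hkN)
      (fun i _ hi => by simp [Finset.mem_range.not.1 hi])]
    rw [← Fin.sum_univ_eq_sum_range
      (fun i => if h : i < k then L i ((f ⟨i, h⟩ : D) : EuclideanSpace ℝ (Fin n)) else 0) k]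
    exact Finset.sum_congr rfl fun j _ => by simp [j.2]
  have hnull : ∀ ℓ ∈ Dinfty B D, ∀ ℓ' ∈ Dinfty B D, ℓ ≠ ℓ' →
      volume ((fun y => y + ℓ) '' K ∩ (fun y => y + ℓ') '' K) = 0 := by
    rintro ℓ ⟨k, _, f, rfl⟩ ℓ' ⟨k', _, f', rfl⟩ hne
    rcases hpad k (max k k') (le_max_left _ _) f with ⟨g, hg⟩
    rcases hpad k' (max k k') (le_max_right _ _) f' with ⟨g', hg'⟩
    have h := hC (max k k') g g' (by rw [hg, hg']; exact hne)
    rwa [hg, hg'] at h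
  have hcount : (Dinfty B D).Countable := by
    have h : Dinfty B D ⊆ ⋃ k : ℕ, Set.range (fun f : Fin k → D => S k f) := by
      rintro x ⟨k, _, f, rfl⟩
      exact Set.mem_iUnion.2 ⟨k, ⟨f, rfl⟩⟩
    exact (Set.countable_iUnion fun k => (Set.finite_range _).countable).mono h
  haveI := hcount.to_subtype
  have hae : ∀ᵐ x : EuclideanSpace ℝ (Fin n), ∀ ℓ : Dinfty B D, ∀ ℓ' : Dinfty B D, ℓ ≠ ℓ' →
      ¬(x ∈ (fun y => y + (ℓ : EuclideanSpace ℝ (Fin n))) '' K ∧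
        x ∈ (fun y => y + (ℓ' : EuclideanSpace ℝ (Fin n))) '' K) := by
    rw [ae_all_iff]
    intro ℓ
    rw [ae_all_iff]
    intro ℓ'
    by_cases h : ℓ = ℓ'
    · filter_upwards with x h' using absurd h h'
    · have hv : (ℓ : EuclideanSpace ℝ (Fin n)) ≠ (ℓ' : EuclideanSpace ℝ (Fin n)) :=
        fun hc => h (Subtype.ext hc)
      have h0 := hnull ℓ ℓ.2 ℓ' ℓ'.2 hv
      have h1 := measure_eq_zero_iff_ae_notMem.1 h0
      filter_upwards [h1] with x hx _ hmem
      exact hx ⟨hmem.1, hmem.2⟩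
  filter_upwards [hae] with x hx
  by_cases hex : ∃ ℓ : Dinfty B D, x ∈ (fun y => y + (ℓ : EuclideanSpace ℝ (Fin n))) '' K
  · rcases hex with ⟨ℓ0, h0⟩
    rw [tsum_eq_single ℓ0 ?_]
    · rw [Set.indicator_of_mem h0]
    · intro b hb
      have hb' : x ∉ (fun y => y + (b : EuclideanSpace ℝ (Fin n))) '' K :=
        fun hxb => hx b ℓ0 hb ⟨hxb, h0⟩
      exact Set.indicator_of_notMem hb' _
  · have h : ∀ ℓ : Dinfty B D,
        ((fun y => y + (ℓ : EuclideanSpace ℝ (Fin n))) '' K).indicator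
          (fun _ => (1 : ℝ≥0∞)) x = 0 := fun ℓ =>
      Set.indicator_of_notMem (fun hxl => hex ⟨ℓ, hxl⟩) _
    rw [tsum_congr h, tsum_zero]
    exact zero_le_one
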